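/- Let X = {(z₁,z₂) ∈ ℂ² : z₁z₂ + 1 ≠ 0} and f(z₁,z₂) = ((|z₁|² − |z₂|²)/2, log |z₁z₂ + 1|). For every p ∈ X with p ≠ (0,0), the kernel of the Fréchet derivative Df_p is a 2-dimensional ℝ-linear subspace of ℂ² ≅ ℝ⁴ on which the standard symplectic form ω vanishes identically (i.e. ω(u,v) = 0 for all u, v in the kernel). In other words, the regular fibres of f are Lagrangian. -/

import Mathlib

/-- The complement of the nodal curve `z₁z₂ + 1 = 0` in `ℂ²`. -/
def X0 : Set (ℂ × ℂ) := {z | z.1 * z.2 + 1 ≠ 0}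

/-- The focus-focus (nodal) Lagrangian fibration
`f(z₁,z₂) = ((|z₁|² − |z₂|²)/2, log |z₁z₂ + 1|)`. -/
noncomputable def f0 (z : ℂ × ℂ) : ℝ × ℝ :=
  ((‖z.1‖ ^ 2 - ‖z.2‖ ^ 2) / 2,
    Real.log ‖z.1 * z.2 + 1‖)

/-- The standard symplectic form on `ℂ²`: `ω(u,v) = ∑ⱼ Im(conj uⱼ · vⱼ)`. -/
def omega2 (u v : ℂ × ℂ) : ℝ :=
  ((starRingEnd ℂ) u.1 * v.1).im + ((starRingEnd ℂ) u.2 * v.2).im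

open Complex

/-- The explicit derivative of `f0` at `p`. -/
noncomputable def Lmap (p : ℂ × ℂ) : (ℂ × ℂ) →L[ℝ] ℝ × ℝ :=
  LinearMap.toContinuousLinearMap
  { toFun := fun u =>
      (((starRingEnd ℂ) p.1 * u.1).re - ((starRingEnd ℂ) p.2 * u.2).re,
       ((starRingEnd ℂ) (p.1 * p.2 + 1) * (u.1 * p.2 + p.1 * u.2)).re
         / Complex.normSq (p.1 * p.2 + 1))
    map_add' := by
      intro u v
      simp only [Prod.fst_add, Prod.snd_add, Prod.mk_add_mk, Prod.mk.injEq]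
      constructor
      · simp only [Complex.mul_re, Complex.mul_im, Complex.add_re, Complex.add_im]; ring
      · rw [← add_div]; congr 1
        simp only [Complex.mul_re, Complex.mul_im, Complex.add_re, Complex.add_im]; ring
    map_smul' := by
      intro c u
      simp only [Prod.smul_fst, Prod.smul_snd, RingHom.id_apply, Prod.smul_mk, smul_eq_mul,
        Prod.mk.injEq]
      constructor
      · simp only [Complex.mul_re, Complex.mul_im, Complex.add_re, Complex.add_im,
          Complex.smul_re, Complex.smul_im, smul_eq_mul]; ring
      · rw [mul_div_assoc']; congr 1
        simp only [Complex.mul_re, Complex.mul_im, Complex.add_re, Complex.add_im,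
          Complex.smul_re, Complex.smul_im, smul_eq_mul]; ring }

theorem Lmap_apply (p u : ℂ × ℂ) : Lmap p u =
    (((starRingEnd ℂ) p.1 * u.1).re - ((starRingEnd ℂ) p.2 * u.2).re,
       ((starRingEnd ℂ) (p.1 * p.2 + 1) * (u.1 * p.2 + p.1 * u.2)).re
         / Complex.normSq (p.1 * p.2 + 1)) := rfl

theorem f0_eq : f0 = fun z : ℂ × ℂ =>
    ((2:ℝ)⁻¹ • (Complex.normSq z.1 - Complex.normSq z.2),
      (2:ℝ)⁻¹ • Real.log (Complex.normSq (z.1 * z.2 + 1))) := by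
  funext z
  simp only [f0, Complex.sq_norm, smul_eq_mul]
  rw [Complex.norm_def, Real.log_sqrt (normSq_nonneg _)]
  rw [Prod.mk.injEq]
  constructor <;> ring

theorem hasFDeriv_f0 (p : ℂ × ℂ) (hw : p.1 * p.2 + 1 ≠ 0) :
    HasFDerivAt f0 (Lmap p) p := by
  have hns : ∀ (g : (ℂ × ℂ) → ℂ) (G : (ℂ × ℂ) →L[ℝ] ℂ), HasFDerivAt g G p →
      HasFDerivAt (fun z => Complex.normSq (g z))
        (Complex.reCLM.comp ((starRingEnd ℂ) (g p) • G
          + g p • (Complex.conjCLE.toContinuousLinearMap.comp G))) p := by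
    intro g G hg
    have h1 : HasFDerivAt (fun z => (starRingEnd ℂ) (g z))
        (Complex.conjCLE.toContinuousLinearMap.comp G) p :=
      (Complex.conjCLE.toContinuousLinearMap.hasFDerivAt).comp p hg
    have h2 := h1.mul hg
    have h3 := Complex.reCLM.hasFDerivAt.comp p h2
    have heq : (fun z => Complex.normSq (g z))
        = fun z => Complex.reCLM ((starRingEnd ℂ) (g z) * g z) := by
      funext z
      simp [Complex.normSq_apply, Complex.mul_re, Complex.mul_im]
    rw [heq]
    exact h3
  have hw' : Complex.normSq (p.1 * p.2 + 1) ≠ 0 := by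
    simpa [Complex.normSq_eq_zero] using hw
  have h_n1 := hns (fun z => z.1) (ContinuousLinearMap.fst ℝ ℂ ℂ) hasFDerivAt_fst
  have h_n2 := hns (fun z => z.2) (ContinuousLinearMap.snd ℝ ℂ ℂ) hasFDerivAt_snd
  have h_first := (h_n1.sub h_n2).const_smul ((2:ℝ)⁻¹)
  have h_w := ((hasFDerivAt_fst (p := p)).mul (𝕜 := ℝ) (hasFDerivAt_snd (p := p))).add_const (1 : ℂ)
  have h_n3 := hns _ _ h_w
  have h_log := (Real.hasDerivAt_log hw').comp_hasFDerivAt p h_n3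
  have h_second := h_log.const_smul ((2:ℝ)⁻¹)
  have total := h_first.prodMk h_second
  rw [f0_eq]
  refine total.congr_fderiv ?_
  refine ContinuousLinearMap.ext fun u => ?_
  rw [Lmap_apply]
  apply Prod.ext
  · simp [Complex.mul_re, Complex.mul_im]
    ring
  · simp [Complex.mul_re, Complex.mul_im, Complex.add_re, Complex.add_im, smul_eq_mul]
    field_simp
    ring

set_option maxHeartbeats 1000000 in
/-- The regular fibres of the nodal fibration are Lagrangian. -/
theorem stmt2 :
    ∀ p ∈ X0, p ≠ 0 →
      Module.finrank ℝ ↥(LinearMap.ker (fderiv ℝ f0 p : ℂ × ℂ →ₗ[ℝ] ℝ × ℝ)) = 2 ∧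
      ∀ u ∈ LinearMap.ker (fderiv ℝ f0 p : ℂ × ℂ →ₗ[ℝ] ℝ × ℝ), ∀ v ∈ LinearMap.ker (fderiv ℝ f0 p : ℂ × ℂ →ₗ[ℝ] ℝ × ℝ),
        omega2 u v = 0 := by
  intro p hp hp0
  have hw : p.1 * p.2 + 1 ≠ 0 := hp
  have hw' : Complex.normSq (p.1 * p.2 + 1) ≠ 0 := by
    simpa [Complex.normSq_eq_zero] using hw
  have hD : fderiv ℝ f0 p = Lmap p := (hasFDeriv_f0 p hw).fderiv
  rw [hD]
  have hc0 : Complex.normSq p.1 + Complex.normSq p.2 ≠ 0 := by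
    have hp1 : p.1 ≠ 0 ∨ p.2 ≠ 0 := by
      by_contra h; push_neg at h; exact hp0 (Prod.ext h.1 h.2)
    rcases hp1 with h | h <;>
      nlinarith [Complex.normSq_pos.2 h, Complex.normSq_nonneg p.1, Complex.normSq_nonneg p.2]
  -- images of two explicit vectors
  have e1 : Lmap p (p.1, -p.2) = (Complex.normSq p.1 + Complex.normSq p.2, 0) := by
    rw [Lmap_apply]
    rw [Prod.mk.injEq]
    constructor
    · simp only [Complex.mul_re, Complex.mul_im, Complex.neg_re, Complex.neg_im,
        Complex.conj_re, Complex.conj_im, Complex.normSq_apply]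
      ring
    · rw [div_eq_zero_iff]; left
      simp only [Complex.mul_re, Complex.mul_im, Complex.add_re, Complex.add_im,
        Complex.neg_re, Complex.neg_im, Complex.conj_re, Complex.conj_im,
        map_add, map_mul, map_one, Complex.one_re, Complex.one_im]
      ring
  have e2 : Lmap p ((p.1 * p.2 + 1) * (starRingEnd ℂ) p.2, (p.1 * p.2 + 1) * (starRingEnd ℂ) p.1)
      = (0, Complex.normSq p.1 + Complex.normSq p.2) := by
    rw [Lmap_apply]
    rw [Prod.mk.injEq]
    constructor
    · simp only [Complex.mul_re, Complex.mul_im, Complex.add_re, Complex.add_im,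
        Complex.conj_re, Complex.conj_im, map_add, map_mul, map_one,
        Complex.one_re, Complex.one_im]
      ring
    · rw [div_eq_iff hw']
      simp only [Complex.mul_re, Complex.mul_im, Complex.add_re, Complex.add_im,
        Complex.conj_re, Complex.conj_im, map_add, map_mul, map_one,
        Complex.one_re, Complex.one_im, Complex.normSq_apply]
      ring
  -- surjectivity of Lmap p
  have hrange : LinearMap.range ((Lmap p : (ℂ × ℂ) →L[ℝ] ℝ × ℝ) : (ℂ × ℂ) →ₗ[ℝ] ℝ × ℝ) = ⊤ := by
    rw [LinearMap.range_eq_top]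
    rintro ⟨s, t⟩
    refine ⟨(s / (Complex.normSq p.1 + Complex.normSq p.2)) • (p.1, -p.2)
      + (t / (Complex.normSq p.1 + Complex.normSq p.2)) •
          ((p.1 * p.2 + 1) * (starRingEnd ℂ) p.2, (p.1 * p.2 + 1) * (starRingEnd ℂ) p.1), ?_⟩
    simp only [ContinuousLinearMap.coe_coe, map_add, map_smul, e1, e2]
    rw [Prod.smul_mk, Prod.smul_mk, Prod.mk_add_mk, Prod.mk.injEq]
    constructor <;> simp [smul_eq_mul, div_mul_cancel₀, hc0]
  -- dimension of the kernel
  have h4 : Module.finrank ℝ (ℂ × ℂ) = 4 := by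
    simp [Module.finrank_prod, Complex.finrank_real_complex]
  have hrn := LinearMap.finrank_range_add_finrank_ker
    ((Lmap p : (ℂ × ℂ) →L[ℝ] ℝ × ℝ) : (ℂ × ℂ) →ₗ[ℝ] ℝ × ℝ)
  rw [hrange, h4] at hrn
  have htop : Module.finrank ℝ (⊤ : Submodule ℝ (ℝ × ℝ)) = 2 := by
    simp [finrank_top, Module.finrank_prod]
  rw [htop] at hrn
  have hkc : LinearMap.ker ((Lmap p : (ℂ × ℂ) →L[ℝ] ℝ × ℝ) : (ℂ × ℂ) →ₗ[ℝ] ℝ × ℝ)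
      = LinearMap.ker (Lmap p : (ℂ × ℂ) →ₗ[ℝ] ℝ × ℝ) := rfl
  rw [hkc] at hrn
  have hkerdim : Module.finrank ℝ (LinearMap.ker (Lmap p : (ℂ × ℂ) →ₗ[ℝ] ℝ × ℝ)) = 2 := by omega
  refine ⟨hkerdim, ?_⟩
  -- the two tangent vectors
  have hm1 : ((-I * p.1, I * p.2) : ℂ × ℂ) ∈ LinearMap.ker (Lmap p : (ℂ × ℂ) →ₗ[ℝ] ℝ × ℝ) := by
    rw [LinearMap.mem_ker, ContinuousLinearMap.coe_coe, Lmap_apply]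
    have : ((0 : ℝ × ℝ)) = ((0 : ℝ), (0 : ℝ)) := rfl
    rw [this, Prod.mk.injEq]
    constructor
    · simp only [Complex.mul_re, Complex.mul_im, Complex.neg_re, Complex.neg_im,
        Complex.I_re, Complex.I_im, Complex.conj_re, Complex.conj_im]
      ring
    · rw [div_eq_zero_iff]; left
      simp only [Complex.mul_re, Complex.mul_im, Complex.add_re, Complex.add_im,
        Complex.neg_re, Complex.neg_im, Complex.I_re, Complex.I_im,
        Complex.conj_re, Complex.conj_im, map_add, map_mul, map_one,
        Complex.one_re, Complex.one_im]
      ring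
  have hm2 : ((-I * (p.1 * p.2 + 1) * (starRingEnd ℂ) p.2,
      -I * (p.1 * p.2 + 1) * (starRingEnd ℂ) p.1) : ℂ × ℂ) ∈ LinearMap.ker (Lmap p : (ℂ × ℂ) →ₗ[ℝ] ℝ × ℝ) := by
    rw [LinearMap.mem_ker, ContinuousLinearMap.coe_coe, Lmap_apply]
    have : ((0 : ℝ × ℝ)) = ((0 : ℝ), (0 : ℝ)) := rfl
    rw [this, Prod.mk.injEq]
    constructor
    · simp only [Complex.mul_re, Complex.mul_im, Complex.neg_re, Complex.neg_im,
        Complex.I_re, Complex.I_im, Complex.conj_re, Complex.conj_im,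
        map_add, map_mul, map_one, Complex.add_re, Complex.add_im,
        Complex.one_re, Complex.one_im]
      ring
    · rw [div_eq_zero_iff]; left
      simp only [Complex.mul_re, Complex.mul_im, Complex.add_re, Complex.add_im,
        Complex.neg_re, Complex.neg_im, Complex.I_re, Complex.I_im,
        Complex.conj_re, Complex.conj_im, map_add, map_mul, map_one,
        Complex.one_re, Complex.one_im]
      ring
  set ξ1 : ℂ × ℂ := (-I * p.1, I * p.2) with hx1
  set ξ2 : ℂ × ℂ := (-I * (p.1 * p.2 + 1) * (starRingEnd ℂ) p.2,
    -I * (p.1 * p.2 + 1) * (starRingEnd ℂ) p.1) with hx2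
  -- key omega computations
  have key0 : ∀ a b c d : ℝ,
      omega2 (a • ξ1 + b • ξ2) (c • ξ1 + d • ξ2) = 0 := by
    intro a b c d
    rw [hx1, hx2]
    simp only [omega2, Prod.smul_mk, Prod.mk_add_mk, Complex.real_smul, map_add, map_mul,
      Complex.mul_im, Complex.mul_re, Complex.add_re, Complex.add_im, Complex.conj_re,
      Complex.conj_im, Complex.I_re, Complex.I_im, Complex.neg_re, Complex.neg_im,
      Complex.ofReal_re, Complex.ofReal_im, map_neg, map_one, Complex.one_re, Complex.one_im]
    ring
  have key1 : ∀ a b : ℝ, omega2 (a • ξ1 + b • ξ2) (p.1, -p.2)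
      = a * (Complex.normSq p.1 + Complex.normSq p.2) := by
    intro a b
    rw [hx1, hx2]
    simp only [omega2, Prod.smul_mk, Prod.mk_add_mk, Complex.real_smul, map_add, map_mul,
      Complex.mul_im, Complex.mul_re, Complex.add_re, Complex.add_im, Complex.conj_re,
      Complex.conj_im, Complex.I_re, Complex.I_im, Complex.neg_re, Complex.neg_im,
      Complex.ofReal_re, Complex.ofReal_im, map_neg, map_one, Complex.one_re, Complex.one_im,
      Complex.normSq_apply]
    ring
  have key2 : ∀ a b : ℝ, omega2 (a • ξ1 + b • ξ2)
      ((p.1 * p.2 + 1) * (starRingEnd ℂ) p.2, (p.1 * p.2 + 1) * (starRingEnd ℂ) p.1)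
      = b * Complex.normSq (p.1 * p.2 + 1) * (Complex.normSq p.1 + Complex.normSq p.2) := by
    intro a b
    rw [hx1, hx2]
    simp only [omega2, Prod.smul_mk, Prod.mk_add_mk, Complex.real_smul, map_add, map_mul,
      Complex.mul_im, Complex.mul_re, Complex.add_re, Complex.add_im, Complex.conj_re,
      Complex.conj_im, Complex.I_re, Complex.I_im, Complex.neg_re, Complex.neg_im,
      Complex.ofReal_re, Complex.ofReal_im, map_neg, map_one, Complex.one_re, Complex.one_im,
      Complex.normSq_apply]
    ring
  -- linear independence of ξ1, ξ2
  have li : LinearIndependent ℝ ![ξ1, ξ2] := by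
    rw [LinearIndependent.pair_iff]
    intro s t hst
    have e1' := key1 s t
    have e2' := key2 s t
    rw [hst] at e1' e2'
    have hz : omega2 0 (p.1, -p.2) = 0 := by simp [omega2]
    have hz2 : omega2 0
        ((p.1 * p.2 + 1) * (starRingEnd ℂ) p.2, (p.1 * p.2 + 1) * (starRingEnd ℂ) p.1) = 0 := by
      simp [omega2]
    rw [hz] at e1'; rw [hz2] at e2'
    constructor
    · exact (mul_eq_zero.mp e1'.symm).resolve_right hc0
    · rcases mul_eq_zero.mp e2'.symm with h | h
      · exact (mul_eq_zero.mp h).resolve_right hw'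
      · exact absurd h hc0
  -- span of ξ1 ξ2 equals the kernel
  have hspan_rank : Module.finrank ℝ (Submodule.span ℝ {ξ1, ξ2} : Submodule ℝ (ℂ × ℂ)) = 2 := by
    have h := finrank_span_eq_card li
    have hr : Set.range ![ξ1, ξ2] = {ξ1, ξ2} := by
      ext z; simp [Fin.exists_fin_two, or_comm]
    rw [hr] at h
    simpa using h
  have hle : Submodule.span ℝ {ξ1, ξ2} ≤ LinearMap.ker (Lmap p : (ℂ × ℂ) →ₗ[ℝ] ℝ × ℝ) := by
    rw [Submodule.span_le]
    intro x hx
    rcases hx with rfl | hx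
    · exact hm1
    · rcases hx with rfl
      exact hm2
  have hspan_eq : Submodule.span ℝ {ξ1, ξ2} = LinearMap.ker (Lmap p : (ℂ × ℂ) →ₗ[ℝ] ℝ × ℝ) :=
    Submodule.eq_of_le_of_finrank_eq hle (by rw [hspan_rank, hkerdim])
  intro u hu v hv
  rw [← hspan_eq] at hu hv
  obtain ⟨a, b, hab⟩ := Submodule.mem_span_pair.mp hu
  obtain ⟨c, d, hcd⟩ := Submodule.mem_span_pair.mp hv
  rw [← hab, ← hcd]
  exact key0 a b c d
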